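/- Every interior point q of the simplex satisfying the local evolutionary stability condition Σ_a q^a f_a(q') > Σ_a q'^a f_a(q') for all q' ≠ q near q is an asymptotically (Lyapunov) stable rest point of the replicator dynamics dq'^a/dt = q'^a (f_a(q') − Σ_b q'^b f_b(q')). -/

import Mathlib

open Filter

/-- The open standard simplex over a finite alphabet. -/
def openSimplex (A : Type*) [Fintype A] : Set (A → ℝ) :=
  {p | (∀ a, 0 < p a) ∧ ∑ a, p a = 1}

/-- `c` is a solution of the replicator dynamics for selection functions `f`, staying in the
open simplex for all nonnegative times. -/
def IsReplicatorSolution {A : Type*} [Fintype A]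
    (f : A → (A → ℝ) → ℝ) (c : ℝ → A → ℝ) : Prop :=
  (∀ t : ℝ, 0 ≤ t → c t ∈ openSimplex A) ∧
  (∀ t : ℝ, 0 ≤ t → ∀ a,
    HasDerivAt (fun s => c s a)
      (c t a * (f a (c t) - ∑ b, c t b * f b (c t))) t)

namespace EssAux

variable {A : Type*} [Fintype A]

/-- Relative entropy (Lyapunov function). -/
noncomputable def V (q : A → ℝ) (p : A → ℝ) : ℝ :=
  ∑ a, q a * (Real.log (q a) - Real.log (p a))

/-- Clamped relative entropy, globally continuous when `r < q a` for all `a`. -/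
noncomputable def Vc (q : A → ℝ) (r : ℝ) (p : A → ℝ) : ℝ :=
  ∑ a, q a * (Real.log (q a) - Real.log (max (p a) (q a - r)))

/-- The fitness advantage of `q` against `p`. -/
noncomputable def Wf (q : A → ℝ) (f : A → (A → ℝ) → ℝ) (p : A → ℝ) : ℝ :=
  ∑ a, q a * f a p - ∑ a, p a * f a p

lemma V_self (q : A → ℝ) : V q q = 0 := by simp [V]

lemma Vc_eq_V (q : A → ℝ) (r : ℝ) (p : A → ℝ) (h : ∀ a, q a - r ≤ p a) :
    Vc q r p = V q p := by
  unfold Vc V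
  refine Finset.sum_congr rfl fun a _ => ?_
  rw [max_eq_left (h a)]

lemma Vc_eq_V_of_ball (q : A → ℝ) (r : ℝ) (p : A → ℝ) (h : ‖p - q‖ ≤ r) :
    Vc q r p = V q p := by
  refine Vc_eq_V q r p fun a => ?_
  have := norm_le_pi_norm (p - q) a
  have : |p a - q a| ≤ r := le_trans (by simpa using this) h
  have := abs_le.1 this
  linarith [this.1]

lemma Vc_continuous (q : A → ℝ) (r : ℝ) (hr : ∀ a, r < q a) :
    Continuous (Vc q r) := by
  refine continuous_finset_sum _ fun a _ => ?_
  refine continuous_const.mul (continuous_const.sub ?_)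
  have hpos : ∀ p : A → ℝ, max (p a) (q a - r) ≠ 0 := fun p =>
    ne_of_gt (lt_of_lt_of_le (by linarith [hr a]) (le_max_right _ _))
  exact (Real.continuousOn_log.comp_continuous
    ((continuous_apply a).max continuous_const) hpos)

lemma V_pos (q : A → ℝ) (hq : q ∈ openSimplex A) (p : A → ℝ)
    (hp : ∀ a, 0 < p a) (hps : ∑ a, p a = 1) (hne : p ≠ q) : 0 < V q p := by
  obtain ⟨hqpos, hqs⟩ := hq
  have key : ∀ a, q a - p a ≤ q a * (Real.log (q a) - Real.log (p a)) := by
    intro a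
    have h := Real.log_le_sub_one_of_pos (div_pos (hp a) (hqpos a))
    rw [Real.log_div (ne_of_gt (hp a)) (ne_of_gt (hqpos a))] at h
    have e : q a * (p a / q a) = p a := mul_div_cancel₀ _ (ne_of_gt (hqpos a))
    nlinarith [mul_le_mul_of_nonneg_left h (le_of_lt (hqpos a))]
  obtain ⟨a₀, ha₀⟩ : ∃ a, p a ≠ q a := by
    by_contra h
    push_neg at h
    exact hne (funext h)
  have strict : q a₀ - p a₀ < q a₀ * (Real.log (q a₀) - Real.log (p a₀)) := by
    have hne1 : p a₀ / q a₀ ≠ 1 := by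
      rw [Ne, div_eq_one_iff_eq (ne_of_gt (hqpos a₀))]; exact ha₀
    have h := Real.log_lt_sub_one_of_pos (div_pos (hp a₀) (hqpos a₀)) hne1
    rw [Real.log_div (ne_of_gt (hp a₀)) (ne_of_gt (hqpos a₀))] at h
    have e : q a₀ * (p a₀ / q a₀) = p a₀ := mul_div_cancel₀ _ (ne_of_gt (hqpos a₀))
    nlinarith [mul_lt_mul_of_pos_left h (hqpos a₀)]
  have hsum : ∑ a, (q a - p a) < V q p :=
    Finset.sum_lt_sum (fun a _ => key a) ⟨a₀, Finset.mem_univ _, strict⟩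
  have : ∑ a, (q a - p a) = 0 := by rw [Finset.sum_sub_distrib, hqs, hps]; ring
  linarith

lemma V_nonneg (q : A → ℝ) (hq : q ∈ openSimplex A) (p : A → ℝ)
    (hp : ∀ a, 0 < p a) (hps : ∑ a, p a = 1) : 0 ≤ V q p := by
  rcases eq_or_ne p q with h | h
  · simp [h, V_self]
  · exact le_of_lt (V_pos q hq p hp hps h)

lemma coord_pos (q : A → ℝ) (r : ℝ) (hr : ∀ a, r < q a)
    (p : A → ℝ) (h : ‖p - q‖ ≤ r) : ∀ a, 0 < p a := by
  intro a
  have h1 : |p a - q a| ≤ r := le_trans (by simpa using norm_le_pi_norm (p - q) a) h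
  have := abs_le.1 h1
  linarith [hr a, this.1]

lemma hasDerivAt_V (q : A → ℝ) (hq : q ∈ openSimplex A)
    (f : A → (A → ℝ) → ℝ) (c : ℝ → A → ℝ) (hc : IsReplicatorSolution f c)
    (t : ℝ) (ht : 0 ≤ t) :
    HasDerivAt (fun s => V q (c s)) (-(Wf q f (c t))) t := by
  obtain ⟨hmem, hder⟩ := hc
  have hpos : ∀ a, 0 < c t a := (hmem t ht).1
  set F : ℝ := ∑ b, c t b * f b (c t) with hF
  have hterm : ∀ a : A, HasDerivAt (fun s => q a * (Real.log (q a) - Real.log (c s a)))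
      (q a * (0 - (f a (c t) - F))) t := by
    intro a
    have hlog : HasDerivAt (fun s => Real.log (c s a))
        ((c t a * (f a (c t) - F)) / c t a) t :=
      (hder t ht a).log (ne_of_gt (hpos a))
    rw [mul_div_assoc, mul_comm, div_mul_cancel₀ _ (ne_of_gt (hpos a))] at hlog
    exact ((hasDerivAt_const t (Real.log (q a))).sub hlog).const_mul (q a)
  have hsum := HasDerivAt.fun_sum (fun a (_ : a ∈ Finset.univ) => hterm a)
  have heq : ∑ a, q a * (0 - (f a (c t) - F)) = -(Wf q f (c t)) := by
    unfold Wf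
    rw [← hF]
    have h1 : ∑ a, q a * (0 - (f a (c t) - F)) = (∑ a, q a * F) - ∑ a, q a * f a (c t) := by
      rw [← Finset.sum_sub_distrib]; exact Finset.sum_congr rfl fun a _ => by ring
    rw [h1, ← Finset.sum_mul, hq.2, one_mul]
    ring
  rw [heq] at hsum
  exact hsum

/-- Fundamental decay lemma for the Lyapunov function. -/
lemma antitone_V (q : A → ℝ) (hq : q ∈ openSimplex A)
    (f : A → (A → ℝ) → ℝ) (c : ℝ → A → ℝ) (hc : IsReplicatorSolution f c)
    (κ : ℝ) (s : Set ℝ) (hconv : Convex ℝ s) (hs : s ⊆ Set.Ici 0)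
    (hW : ∀ t ∈ s, κ ≤ Wf q f (c t)) :
    AntitoneOn (fun t => V q (c t) + κ * t) s := by
  have hd : ∀ t ∈ s, HasDerivAt (fun u => V q (c u) + κ * u) (-(Wf q f (c t)) + κ) t := by
    intro t hts
    have h2 : HasDerivAt (fun u : ℝ => κ * u) (κ * 1) t := (hasDerivAt_id t).const_mul κ
    rw [mul_one] at h2
    exact (hasDerivAt_V q hq f c hc t (hs hts)).add h2
  refine antitoneOn_of_deriv_nonpos hconv ?_ ?_ ?_
  · exact fun t hts => (hd t hts).continuousAt.continuousWithinAt
  · intro t hts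
    exact (hd t (interior_subset hts)).differentiableAt.differentiableWithinAt
  · intro t hts
    rw [(hd t (interior_subset hts)).deriv]
    linarith [hW t (interior_subset hts)]

/-- Minimum of the clamped Lyapunov function on a compact annulus. -/
lemma annulus_min (q : A → ℝ) (hq : q ∈ openSimplex A) (r ε' : ℝ)
    (hr : ∀ a, r < q a) (hε' : 0 < ε') :
    ∃ m > 0, ∀ p : A → ℝ, (∑ a, p a = 1) → ε' ≤ ‖p - q‖ → ‖p - q‖ ≤ r →
      m ≤ Vc q r p := by
  set C : Set (A → ℝ) :=
    {p | (∑ a, p a = 1) ∧ ε' ≤ ‖p - q‖ ∧ ‖p - q‖ ≤ r} with hC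
  have hclosed : IsClosed C := by
    have h1 : IsClosed {p : A → ℝ | ∑ a, p a = 1} :=
      isClosed_eq (continuous_finset_sum _ fun a _ => continuous_apply a) continuous_const
    have h2 : IsClosed {p : A → ℝ | ε' ≤ ‖p - q‖} :=
      isClosed_le continuous_const ((continuous_id.sub continuous_const).norm)
    have h3 : IsClosed {p : A → ℝ | ‖p - q‖ ≤ r} :=
      isClosed_le ((continuous_id.sub continuous_const).norm) continuous_const
    exact (h1.inter (h2.inter h3))
  have hsub : C ⊆ Metric.closedBall q r := by
    intro p hp
    rw [Metric.mem_closedBall, dist_eq_norm]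
    exact hp.2.2
  have hcomp : IsCompact C :=
    (isCompact_closedBall q r).of_isClosed_subset hclosed hsub
  rcases Set.eq_empty_or_nonempty C with hemp | hne
  · refine ⟨1, one_pos, fun p h1 h2 h3 => absurd ?_ (Set.eq_empty_iff_forall_notMem.1 hemp p)⟩
    exact ⟨h1, h2, h3⟩
  · obtain ⟨p₀, hp₀C, hp₀min⟩ :=
      hcomp.exists_isMinOn hne ((Vc_continuous q r hr).continuousOn)
    refine ⟨Vc q r p₀, ?_, fun p h1 h2 h3 => hp₀min ⟨h1, h2, h3⟩⟩
    rw [Vc_eq_V_of_ball q r p₀ hp₀C.2.2]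
    refine V_pos q hq p₀ (coord_pos q r hr p₀ hp₀C.2.2) hp₀C.1 ?_
    intro h
    rw [h] at hp₀C
    have h4 := hp₀C.2.1
    rw [sub_self, norm_zero] at h4
    linarith

/-- Nonnegativity of the advantage function in the ESS region. -/
lemma Wf_nonneg (q : A → ℝ) (hq : q ∈ openSimplex A)
    (f : A → (A → ℝ) → ℝ) (U : Set (A → ℝ))
    (hESS : ∀ q' ∈ U ∩ openSimplex A, q' ≠ q →
      ∑ a, q' a * f a q' < ∑ a, q a * f a q')
    (p : A → ℝ) (hpU : p ∈ U) (hpS : p ∈ openSimplex A) : 0 ≤ Wf q f p := by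
  rcases eq_or_ne p q with rfl | hne
  · simp [Wf]
  · have := hESS p ⟨hpU, hpS⟩ hne
    unfold Wf
    linarith

lemma sol_continuousAt (f : A → (A → ℝ) → ℝ) (c : ℝ → A → ℝ)
    (hc : IsReplicatorSolution f c) (t : ℝ) (ht : 0 ≤ t) : ContinuousAt c t := by
  rw [continuousAt_pi]
  exact fun a => (hc.2 t ht a).continuousAt

/-- Trapping lemma: trajectories starting close to `q` stay in the ball of radius `r`. -/
lemma trap (q : A → ℝ) (hq : q ∈ openSimplex A)
    (f : A → (A → ℝ) → ℝ) (U : Set (A → ℝ))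
    (hESS : ∀ q' ∈ U ∩ openSimplex A, q' ≠ q →
      ∑ a, q' a * f a q' < ∑ a, q a * f a q')
    (r : ℝ) (hr0 : 0 < r) (hrq : ∀ a, r < q a)
    (hrU : Metric.closedBall q r ⊆ U) :
    ∃ δ > 0, δ ≤ r ∧ ∀ c : ℝ → A → ℝ, IsReplicatorSolution f c → ‖c 0 - q‖ < δ →
      ∀ t : ℝ, 0 ≤ t → ‖c t - q‖ < r := by
  obtain ⟨m, hm, hmlb⟩ := annulus_min q hq r r hrq hr0
  have hVcq : Vc q r q = 0 := by
    rw [Vc_eq_V_of_ball q r q (by simp [hr0.le]), V_self]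
  have hopen : IsOpen {p : A → ℝ | Vc q r p < m} :=
    isOpen_lt (Vc_continuous q r hrq) continuous_const
  have hqmem : q ∈ {p : A → ℝ | Vc q r p < m} := by simp [hVcq, hm]
  obtain ⟨δ', hδ'pos, hδ'⟩ := Metric.isOpen_iff.1 hopen q hqmem
  refine ⟨min δ' r, lt_min hδ'pos hr0, min_le_right _ _, ?_⟩
  intro c hc hc0 t ht
  by_contra hcon
  push_neg at hcon
  set g : ℝ → ℝ := fun s => ‖c s - q‖ with hg
  have hgc : ∀ s : ℝ, 0 ≤ s → ContinuousAt g s := fun s hs =>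
    ((sol_continuousAt f c hc s hs).sub continuousAt_const).norm
  set S : Set ℝ := {s | s ∈ Set.Icc 0 t ∧ r ≤ g s} with hS
  have hScl : IsClosed S := by
    have := ContinuousOn.preimage_isClosed_of_isClosed
      (s := Set.Icc (0:ℝ) t) (t := Set.Ici r) (f := g)
      (fun s hs => (hgc s hs.1).continuousWithinAt) isClosed_Icc isClosed_Ici
    convert this using 1
    rfl
  have hScomp : IsCompact S :=
    IsCompact.of_isClosed_subset isCompact_Icc hScl (fun s hs => hs.1)
  have hSne : S.Nonempty := ⟨t, ⟨⟨ht, le_refl t⟩, hcon⟩⟩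
  obtain ⟨t₀, ht₀S, ht₀lb⟩ := hScomp.exists_isLeast hSne
  obtain ⟨⟨ht₀0, ht₀t⟩, ht₀r⟩ := ht₀S
  have hg0 : g 0 < r := lt_of_lt_of_le hc0 (min_le_right _ _)
  have ht₀pos : 0 < t₀ := by
    rcases lt_or_eq_of_le ht₀0 with h | h
    · exact h
    · exfalso; rw [← h] at ht₀r; linarith
  have hbelow : ∀ s, 0 ≤ s → s < t₀ → g s < r := by
    intro s hs0 hst
    by_contra hcon2
    push_neg at hcon2
    exact absurd (ht₀lb ⟨⟨hs0, le_trans hst.le ht₀t⟩, hcon2⟩) (not_le.2 hst)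
  have hgle : g t₀ ≤ r := by
    have htd : Filter.Tendsto g (nhdsWithin t₀ (Set.Iio t₀)) (nhds (g t₀)) :=
      ((hgc t₀ ht₀0).tendsto).mono_left nhdsWithin_le_nhds
    refine le_of_tendsto htd ?_
    have hev : ∀ᶠ s in nhdsWithin t₀ (Set.Iio t₀), s ∈ Set.Ioi (0:ℝ) :=
      ((isOpen_Ioi.eventually_mem ht₀pos).filter_mono nhdsWithin_le_nhds)
    filter_upwards [hev, eventually_mem_nhdsWithin] with s hs1 hs2
    exact (hbelow s (le_of_lt hs1) hs2).le
  have hgeq : g t₀ = r := le_antisymm hgle ht₀r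
  have hball : ∀ s ∈ Set.Icc 0 t₀, g s ≤ r := by
    intro s hs
    rcases lt_or_eq_of_le hs.2 with h | h
    · exact (hbelow s hs.1 h).le
    · rw [h, hgeq]
  have hanti := antitone_V q hq f c hc 0 (Set.Icc 0 t₀) (convex_Icc _ _)
      (fun s hs => hs.1)
      (by
        intro s hs
        refine Wf_nonneg q hq f U hESS (c s) ?_ (hc.1 s hs.1)
        apply hrU
        rw [Metric.mem_closedBall, dist_eq_norm]
        exact hball s hs)
  have h1 := hanti (Set.left_mem_Icc.2 ht₀0) (Set.right_mem_Icc.2 ht₀0) ht₀0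
  simp only [zero_mul, add_zero] at h1
  have hV0 : V q (c 0) < m := by
    have h2 : c 0 ∈ Metric.ball q δ' := by
      rw [Metric.mem_ball, dist_eq_norm]
      exact lt_of_lt_of_le hc0 (min_le_left _ _)
    have h3 := hδ' h2
    rwa [Set.mem_setOf_eq, Vc_eq_V_of_ball q r (c 0)
      (le_trans (le_of_lt (lt_of_lt_of_le hc0 (min_le_right _ _))) (le_refl r))] at h3
  have hVt₀ : m ≤ V q (c t₀) := by
    rw [← Vc_eq_V_of_ball q r (c t₀) (le_of_eq hgeq)]
    exact hmlb (c t₀) (hc.1 t₀ ht₀0).2 (le_of_eq hgeq.symm) (le_of_eq hgeq)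
  linarith

/-- Every interior ESS point is a rest point. -/
lemma rest_point (q : A → ℝ) (hq : q ∈ openSimplex A)
    (f : A → (A → ℝ) → ℝ) (hf : ∀ a, ContDiffOn ℝ 1 (f a) (openSimplex A))
    (U : Set (A → ℝ)) (hU : U ∈ nhds q)
    (hESS : ∀ q' ∈ U ∩ openSimplex A, q' ≠ q →
      ∑ a, q' a * f a q' < ∑ a, q a * f a q') :
    ∀ a, q a * (f a q - ∑ b, q b * f b q) = 0 := by
  classical
  have hle : ∀ a b, f a q ≤ f b q := by
    intro a b
    rcases eq_or_ne a b with rfl | hab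
    · exact le_refl _
    set d : A → ℝ := fun x => (if x = a then 1 else 0) - (if x = b then 1 else 0) with hd
    set p : ℝ → A → ℝ := fun ε x => q x + ε * d x with hp
    have hda : d a = 1 := by simp [hd, hab]
    have hdb : d b = -1 := by simp [hd, Ne.symm hab]
    have hsumd : ∑ x, d x = 0 := by
      simp [hd, Finset.sum_sub_distrib]
    have hsump : ∀ ε, ∑ x, p ε x = 1 := by
      intro ε
      simp only [hp, Finset.sum_add_distrib, ← Finset.mul_sum, hsumd, hq.2, mul_zero, add_zero]
    have hdiff : ∀ ε, ∀ g : A → ℝ,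
        ∑ x, p ε x * g x - ∑ x, q x * g x = ε * (g a - g b) := by
      intro ε g
      have h1 : ∀ x, p ε x * g x - q x * g x = ε * (d x * g x) := fun x => by
        simp only [hp]; ring
      have h2 : ∀ x, d x * g x = (if x = a then g x else 0) - (if x = b then g x else 0) := by
        intro x; simp only [hd]
        split_ifs with h h' <;> first | (exfalso; exact hab (h ▸ h'.symm ▸ rfl)) | ring
      rw [← Finset.sum_sub_distrib]
      simp only [h1, h2]
      rw [← Finset.mul_sum, Finset.sum_sub_distrib]
      simp [Finset.sum_ite_eq']
    have hcont : Continuous fun ε => p ε := by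
      apply continuous_pi
      intro x
      exact continuous_const.add (continuous_id.mul continuous_const)
    have hp0 : p 0 = q := by funext x; simp [hp]
    have htend : Filter.Tendsto p (nhdsWithin 0 (Set.Ioi 0)) (nhds q) := by
      have h0 : Filter.Tendsto p (nhdsWithin 0 (Set.Ioi 0)) (nhds (p 0)) :=
        (hcont.tendsto 0).mono_left (nhdsWithin_le_nhds (s := Set.Ioi 0))
      rwa [hp0] at h0
    have ev1 : ∀ᶠ ε in nhdsWithin 0 (Set.Ioi 0), (0:ℝ) < ε :=
      eventually_mem_nhdsWithin
    have ev2 : ∀ᶠ ε in nhdsWithin 0 (Set.Ioi 0), ε < q b :=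
      (gt_mem_nhds (hq.1 b)).filter_mono nhdsWithin_le_nhds
    have ev3 : ∀ᶠ ε in nhdsWithin 0 (Set.Ioi 0), p ε ∈ U := htend hU
    have evS : ∀ᶠ ε in nhdsWithin 0 (Set.Ioi 0), p ε ∈ openSimplex A := by
      filter_upwards [ev1, ev2] with ε h1 h2
      refine ⟨fun x => ?_, hsump ε⟩
      rcases eq_or_ne x a with rfl | hxa
      · rw [hp]; simp only [hda]; nlinarith [hq.1 x]
      · rcases eq_or_ne x b with rfl | hxb
        · rw [hp]; simp only [hdb]; nlinarith
        · have : d x = 0 := by simp [hd, hxa, hxb]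
          rw [hp]; simp only [this, mul_zero, add_zero]; exact hq.1 x
    have evle : ∀ᶠ ε in nhdsWithin 0 (Set.Ioi 0), f a (p ε) ≤ f b (p ε) := by
      filter_upwards [ev1, ev3, evS] with ε h1 h3 hS
      have hne : p ε ≠ q := by
        intro h
        have := congrFun h a
        simp only [hp, hda, mul_one] at this
        linarith
      have := hESS (p ε) ⟨h3, hS⟩ hne
      have h4 := hdiff ε (fun x => f x (p ε))
      nlinarith
    have hfa : Filter.Tendsto (fun ε => f a (p ε)) (nhdsWithin 0 (Set.Ioi 0)) (nhds (f a q)) := by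
      refine ((hf a).continuousOn q hq).tendsto.comp ?_
      rw [tendsto_nhdsWithin_iff]
      exact ⟨htend, evS⟩
    have hfb : Filter.Tendsto (fun ε => f b (p ε)) (nhdsWithin 0 (Set.Ioi 0)) (nhds (f b q)) := by
      refine ((hf b).continuousOn q hq).tendsto.comp ?_
      rw [tendsto_nhdsWithin_iff]
      exact ⟨htend, evS⟩
    exact le_of_tendsto_of_tendsto hfa hfb evle
  have heq : ∀ a b, f a q = f b q := fun a b => le_antisymm (hle a b) (hle b a)
  intro a
  have : ∑ b, q b * f b q = f a q := by
    have h5 : ∀ b, q b * f b q = q b * f a q := fun b => by rw [heq b a]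
    rw [Finset.sum_congr rfl fun b _ => h5 b, ← Finset.sum_mul, hq.2, one_mul]
  rw [this, sub_self, mul_zero]

end EssAux

open EssAux in
/-- Every interior simplex point satisfying the local evolutionary stability condition is an
asymptotically (Lyapunov) stable rest point of the replicator dynamics. -/
theorem ess_implies_asymptotically_stable {A : Type*} [Fintype A]
    (q : A → ℝ) (hq : q ∈ openSimplex A)
    (f : A → (A → ℝ) → ℝ) (hf : ∀ a, ContDiffOn ℝ 1 (f a) (openSimplex A))
    (U : Set (A → ℝ)) (hU : U ∈ nhds q)
    (hESS : ∀ q' ∈ U ∩ openSimplex A, q' ≠ q →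
      ∑ a, q' a * f a q' < ∑ a, q a * f a q') :
    -- q is a rest point:
    (∀ a, q a * (f a q - ∑ b, q b * f b q) = 0) ∧
    -- Lyapunov stability:
    (∀ ε > 0, ∃ δ > 0, ∀ c : ℝ → A → ℝ, IsReplicatorSolution f c →
      ‖c 0 - q‖ < δ → ∀ t : ℝ, 0 ≤ t → ‖c t - q‖ < ε) ∧
    -- local attraction:
    (∃ δ₀ > 0, ∀ c : ℝ → A → ℝ, IsReplicatorSolution f c →
      ‖c 0 - q‖ < δ₀ → Tendsto (fun t => c t) atTop (nhds q)) := by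
  rcases isEmpty_or_nonempty A with hA | hA
  · exfalso
    have := hq.2
    simp at this
  obtain ⟨r₀, hr₀pos, hball⟩ := Metric.mem_nhds_iff.1 hU
  obtain ⟨a₀, -, ha₀⟩ := Finset.exists_min_image Finset.univ q Finset.univ_nonempty
  refine ⟨rest_point q hq f hf U hU hESS, ?_, ?_⟩
  · -- Lyapunov stability
    intro ε hε
    set r : ℝ := min (min (ε/2) (r₀/2)) (q a₀/2) with hr
    have hr0 : 0 < r := by
      refine lt_min (lt_min (by linarith) (by linarith)) (by linarith [hq.1 a₀])
    have hrq : ∀ a, r < q a := fun a =>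
      lt_of_le_of_lt (min_le_right _ _) (by linarith [hq.1 a₀, ha₀ a (Finset.mem_univ a)])
    have hrU : Metric.closedBall q r ⊆ U := by
      intro p hp
      apply hball
      rw [Metric.mem_ball]
      calc dist p q ≤ r := Metric.mem_closedBall.1 hp
        _ ≤ r₀/2 := le_trans (min_le_left _ _) (min_le_right _ _)
        _ < r₀ := by linarith
    obtain ⟨δ, hδpos, hδr, htrap⟩ := trap q hq f U hESS r hr0 hrq hrU
    refine ⟨δ, hδpos, fun c hc hc0 t ht => ?_⟩
    calc ‖c t - q‖ < r := htrap c hc hc0 t ht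
      _ ≤ ε/2 := le_trans (min_le_left _ _) (min_le_left _ _)
      _ < ε := by linarith
  · -- attraction
    set r : ℝ := min (r₀/2) (q a₀/2) with hr
    have hr0 : 0 < r := lt_min (by linarith) (by linarith [hq.1 a₀])
    have hrq : ∀ a, r < q a := fun a =>
      lt_of_le_of_lt (min_le_right _ _) (by linarith [hq.1 a₀, ha₀ a (Finset.mem_univ a)])
    have hrU : Metric.closedBall q r ⊆ U := by
      intro p hp
      apply hball
      rw [Metric.mem_ball]
      calc dist p q ≤ r := Metric.mem_closedBall.1 hp
        _ ≤ r₀/2 := min_le_left _ _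
        _ < r₀ := by linarith
    obtain ⟨δ₀, hδ₀pos, hδ₀r, htrap⟩ := trap q hq f U hESS r hr0 hrq hrU
    refine ⟨δ₀, hδ₀pos, fun c hc hc0 => ?_⟩
    have htraj : ∀ t : ℝ, 0 ≤ t → ‖c t - q‖ < r := htrap c hc hc0
    have hWnn : ∀ t ∈ Set.Ici (0:ℝ), 0 ≤ Wf q f (c t) := by
      intro t ht
      refine Wf_nonneg q hq f U hESS (c t) ?_ (hc.1 t ht)
      exact hrU (by rw [Metric.mem_closedBall, dist_eq_norm]; exact (htraj t ht).le)
    have hanti := antitone_V q hq f c hc 0 (Set.Ici 0) (convex_Ici 0)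
      (fun _ h => h) hWnn
    have hmono : ∀ t1 t2 : ℝ, 0 ≤ t1 → t1 ≤ t2 → V q (c t2) ≤ V q (c t1) := by
      intro t1 t2 h1 h2
      have := hanti (Set.mem_Ici.2 h1) (Set.mem_Ici.2 (le_trans h1 h2)) h2
      simp only [zero_mul, add_zero] at this
      exact this
    have stepB : ∀ η : ℝ, 0 < η → ∃ t0 : ℝ, 0 ≤ t0 ∧ V q (c t0) < η := by
      intro η hη
      by_contra hcontra
      push_neg at hcontra
      set C : Set (A → ℝ) :=
        {p | (∑ a, p a = 1) ∧ ‖p - q‖ ≤ r ∧ η ≤ Vc q r p} with hC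
      have hclosed : IsClosed C := by
        have h1 : IsClosed {p : A → ℝ | ∑ a, p a = 1} :=
          isClosed_eq (continuous_finset_sum _ fun a _ => continuous_apply a) continuous_const
        have h2 : IsClosed {p : A → ℝ | ‖p - q‖ ≤ r} :=
          isClosed_le ((continuous_id.sub continuous_const).norm) continuous_const
        have h3 : IsClosed {p : A → ℝ | η ≤ Vc q r p} :=
          isClosed_le continuous_const (Vc_continuous q r hrq)
        exact h1.inter (h2.inter h3)
      have hsub : C ⊆ Metric.closedBall q r := fun p hp => by
        rw [Metric.mem_closedBall, dist_eq_norm]; exact hp.2.1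
      have hcomp : IsCompact C :=
        (isCompact_closedBall q r).of_isClosed_subset hclosed hsub
      have hmemC : ∀ t : ℝ, 0 ≤ t → c t ∈ C := by
        intro t ht
        refine ⟨(hc.1 t ht).2, (htraj t ht).le, ?_⟩
        rw [Vc_eq_V_of_ball q r (c t) (htraj t ht).le]
        exact hcontra t ht
      have hCne : C.Nonempty := ⟨c 0, hmemC 0 (le_refl 0)⟩
      have hCS : C ⊆ openSimplex A := fun p hp =>
        ⟨coord_pos q r hrq p hp.2.1, hp.1⟩
      have hWcont : ContinuousOn (Wf q f) (openSimplex A) := by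
        apply ContinuousOn.sub
        · exact continuousOn_finset_sum _ fun a _ =>
            continuousOn_const.mul ((hf a).continuousOn)
        · exact continuousOn_finset_sum _ fun a _ =>
            ((continuous_apply a).continuousOn).mul ((hf a).continuousOn)
      obtain ⟨p₀, hp₀C, hp₀min⟩ := hcomp.exists_isMinOn hCne (hWcont.mono hCS)
      set κ : ℝ := Wf q f p₀ with hκdef
      have hp₀ne : p₀ ≠ q := by
        intro h
        have h4 := hp₀C.2.2
        rw [h, Vc_eq_V_of_ball q r q (by simp [hr0.le]), V_self] at h4
        linarith
      have hκpos : 0 < κ := by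
        have := hESS p₀ ⟨hrU (hsub hp₀C), hCS hp₀C⟩ hp₀ne
        rw [hκdef]; unfold Wf; linarith
      have hanti2 := antitone_V q hq f c hc κ (Set.Ici 0) (convex_Ici 0)
        (fun _ h => h) (fun t ht => hp₀min (hmemC t ht))
      set T : ℝ := V q (c 0) / κ + 1 with hT
      have hV0nn : 0 ≤ V q (c 0) :=
        V_nonneg q hq (c 0) (hc.1 0 (le_refl 0)).1 (hc.1 0 (le_refl 0)).2
      have hTpos : 0 < T := by
        rw [hT]; positivity
      have h5 := hanti2 (Set.mem_Ici.2 (le_refl (0:ℝ))) (Set.mem_Ici.2 hTpos.le) hTpos.le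
      simp only [mul_zero, add_zero] at h5
      have hVTnn : 0 ≤ V q (c T) :=
        V_nonneg q hq (c T) (hc.1 T hTpos.le).1 (hc.1 T hTpos.le).2
      have hκT : κ * T = V q (c 0) + κ := by
        rw [hT]
        field_simp
      nlinarith
    rw [Metric.tendsto_atTop]
    intro ε hε
    set ε' : ℝ := min ε r with hε'
    have hε'pos : 0 < ε' := lt_min hε hr0
    obtain ⟨m', hm', hm'lb⟩ := annulus_min q hq r ε' hrq hε'pos
    obtain ⟨t0, ht0, hVt0⟩ := stepB m' hm'
    refine ⟨t0, fun t htt0 => ?_⟩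
    have ht : 0 ≤ t := le_trans ht0 htt0
    have hVt : V q (c t) < m' := lt_of_le_of_lt (hmono t0 t ht0 htt0) hVt0
    rw [dist_eq_norm]
    by_contra hcon
    push_neg at hcon
    have hge : ε' ≤ ‖c t - q‖ := le_trans (min_le_left _ _) hcon
    have := hm'lb (c t) (hc.1 t ht).2 hge (htraj t ht).le
    rw [Vc_eq_V_of_ball q r (c t) (htraj t ht).le] at this
    linarith
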